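/- Let D be a digraph. For every vertex v: (D*v)*v = D, and if D is acyclic then D*v is acyclic. For distinct vertices u, v with N⁻_D(u) = N⁻_D(v): N⁻_{D▷uv}(u) = N⁻_{D▷uv}(v), (D▷uv)▷uv = D, and if D is acyclic then D▷uv is acyclic. -/

import Mathlib

/-- A digraph, given by its arc relation, is acyclic if it has no directed
cycle. -/
def AcyclicRel {V : Type*} (R : V → V → Prop) : Prop :=
  ∀ v : V, ¬ Relation.TransGen R v v

/-- Local complementation at `v`: arc set `A(D) Δ (N⁻_D(v) × N⁺_D(v))`. -/
def localComp {V : Type*} (R : V → V → Prop) (v : V) : V → V → Prop :=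
  fun x y => Xor' (R x y) (R x v ∧ R v y)

/-- The slide on `uv`: arc set `A(D) Δ {(v,w) : w ∈ N⁺_D(u)}`. -/
def slideRel {V : Type*} (R : V → V → Prop) (u v : V) : V → V → Prop :=
  fun x y => Xor' (R x y) (x = v ∧ R u y)

private lemma transGen_congr_target {V : Type*} {R : V → V → Prop} {u v : V}
    (hN : ∀ w, R w u ↔ R w v) (w : V) :
    Relation.TransGen R w u ↔ Relation.TransGen R w v := by
  constructor <;> intro h <;>
    obtain ⟨c, hc, hcu⟩ := Relation.TransGen.tail'_iff.mp h
  · exact Relation.TransGen.tail'_iff.mpr ⟨c, hc, (hN c).mp hcu⟩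
  · exact Relation.TransGen.tail'_iff.mpr ⟨c, hc, (hN c).mpr hcu⟩

/-- Basic properties of local complementation and slide on a digraph `D`
(a finite irreflexive arc relation): `(D*v)*v = D`; local complementation
preserves acyclicity; and for distinct `u, v` with `N⁻_D(u) = N⁻_D(v)`:
`N⁻_{D▷uv}(u) = N⁻_{D▷uv}(v)`, `(D▷uv)▷uv = D`, and the slide preserves
acyclicity. -/
theorem localComp_slide_basic {V : Type*} [Fintype V] (R : V → V → Prop)
    (hirr : ∀ x : V, ¬ R x x) :
    (∀ v : V,
      localComp (localComp R v) v = R ∧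
      (AcyclicRel R → AcyclicRel (localComp R v))) ∧
    (∀ u v : V, u ≠ v → (∀ w, R w u ↔ R w v) →
      (∀ w, slideRel R u v w u ↔ slideRel R u v w v) ∧
      slideRel (slideRel R u v) u v = R ∧
      (AcyclicRel R → AcyclicRel (slideRel R u v))) := by
  classical
  constructor
  · intro v
    constructor
    · funext x y
      rw [eq_iff_iff]
      have hv := hirr v
      simp only [localComp, Xor', Xor]
      tauto
    · intro hac z hz
      have key : ∀ a b, localComp R v a b → Relation.TransGen R a b := by
        intro a b h
        rcases h with ⟨h1, _⟩ | ⟨h2, _⟩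
        · exact Relation.TransGen.single h1
        · exact (Relation.TransGen.single h2.1).tail h2.2
      have main : ∀ a b, Relation.TransGen (localComp R v) a b →
          Relation.TransGen R a b := by
        intro a b h
        induction h with
        | single h => exact key _ _ h
        | tail _ h ih => exact ih.trans (key _ _ h)
      exact hac z (main z z hz)
  · intro u v hne hN
    refine ⟨?_, ?_, ?_⟩
    · intro w
      have h1 := hirr u
      have h2 := hirr v
      have h3 := hN w
      have h4 := hN u
      have h5 := hN v
      simp only [slideRel, Xor', Xor]
      by_cases hw : w = v
      · subst hw; tauto
      · tauto
    · funext x y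
      rw [eq_iff_iff]
      simp only [slideRel, Xor', Xor]
      by_cases hx : x = v <;> tauto
    · intro hac
      set f : V → ℕ :=
        fun x => (Finset.univ.filter (fun y => Relation.TransGen R y x)).card with hf
      have hstep : ∀ a b, Relation.TransGen R a b → f a < f b := by
        intro a b h
        apply Finset.card_lt_card
        have hsub : Finset.univ.filter (fun y => Relation.TransGen R y a) ⊆
            Finset.univ.filter (fun y => Relation.TransGen R y b) := by
          intro z hz
          simp only [Finset.mem_filter, Finset.mem_univ, true_and] at *
          exact hz.trans h
        refine (Finset.ssubset_iff_of_subset hsub).mpr ⟨a, ?_, ?_⟩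
        · simp only [Finset.mem_filter, Finset.mem_univ, true_and]
          exact h
        · simp only [Finset.mem_filter, Finset.mem_univ, true_and]
          exact hac a
      have feq : f u = f v := by
        simp only [hf]
        congr 1
        apply Finset.filter_congr
        intro x _
        exact transGen_congr_target hN x
      have hstep' : ∀ a b, slideRel R u v a b → f a < f b := by
        intro a b h
        rcases h with ⟨h1, _⟩ | ⟨⟨hxv, huy⟩, _⟩
        · exact hstep a b (Relation.TransGen.single h1)
        · subst hxv
          rw [← feq]
          exact hstep u b (Relation.TransGen.single huy)
      have main : ∀ a b, Relation.TransGen (slideRel R u v) a b → f a < f b := by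
        intro a b h
        induction h with
        | single h => exact hstep' _ _ h
        | tail _ h ih => exact ih.trans (hstep' _ _ h)
      intro z hz
      exact lt_irrefl _ (main z z hz)
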